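/- Let 0 < α < 1, let F be α-SR, and let r > 0 be a monopoly price of F, i.e. φ(r) = 0. Then for every v with 0 ≤ v ≤ r, 1 − F(v) ≤ (1−F(r)) · ( r/((1−α)v + αr) )^{1/(1−α)}. Equivalently, the cumulative hazard rate satisfies H(r) − H(v) ≤ (1/(1−α)) · ln( r/((1−α)v + αr) ). -/

import Mathlib

open MeasureTheory Real Filter

/-- The virtual valuation function `φ(v) = v − (1 − F(v))/f(v)`. -/
noncomputable def virtualValue (F f : ℝ → ℝ) (v : ℝ) : ℝ := v - (1 - F v) / f v

/-- The hazard rate `h(v) = f(v)/(1 − F(v))`. -/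
noncomputable def hazardRate (F f : ℝ → ℝ) (v : ℝ) : ℝ := f v / (1 - F v)

/-- `F` is the CDF of a continuous distribution supported on `[0, ∞)`,
with density `f = F'` that is positive wherever `F < 1`. -/
structure IsCDF (F f : ℝ → ℝ) : Prop where
  zero : F 0 = 0
  mono : Monotone F
  le_one : ∀ v, F v ≤ 1
  tendsto_one : Tendsto F atTop (nhds 1)
  hasDeriv : ∀ v, 0 ≤ v → HasDerivAt F (f v) v
  f_pos : ∀ v, 0 ≤ v → F v < 1 → 0 < f v

/-- `F` is `α`-strongly regular: `φ(y) − φ(x) ≥ α (y − x)` for all `x < y` in the support. -/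
def IsAlphaSR (α : ℝ) (F f : ℝ → ℝ) : Prop :=
  ∀ x y, 0 ≤ x → x < y → F y < 1 →
    virtualValue F f y - virtualValue F f x ≥ α * (y - x)

theorem survival_upper_bound_below_reserve (α : ℝ) (F f : ℝ → ℝ)
    (hα0 : 0 < α) (hα1 : α < 1)
    (hcdf : IsCDF F f) (hSR : IsAlphaSR α F f)
    (r : ℝ) (hr : 0 < r) (hmon : virtualValue F f r = 0)
    (v : ℝ) (hv0 : 0 ≤ v) (hvr : v ≤ r) :
    1 - F v ≤ (1 - F r) * ((r / ((1 - α) * v + α * r)) ^ (1 / (1 - α) : ℝ)) := by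
  have h1α : (0:ℝ) < 1 - α := by linarith
  set c : ℝ := 1 / (1 - α) with hc
  set D : ℝ → ℝ := fun x => (1 - α) * x + α * r with hDdef
  have hDpos : ∀ x, 0 ≤ x → 0 < D x := by
    intro x hx
    have h1 : 0 < α * r := mul_pos hα0 hr
    have h2 : 0 ≤ (1 - α) * x := mul_nonneg h1α.le hx
    simp only [hDdef]; nlinarith
  have hFr : F r < 1 := by
    rcases lt_or_eq_of_le (hcdf.le_one r) with h | h
    · exact h
    · exfalso
      have h2 : virtualValue F f r = r := by
        simp [virtualValue, h]
      rw [hmon] at h2; linarith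
  have hfr : 0 < f r := hcdf.f_pos r hr.le hFr
  have hreq : f r * r = 1 - F r := by
    have h2 : r - (1 - F r) / f r = 0 := hmon
    have h3 : (1 - F r) / f r = r := by linarith
    field_simp at h3; linarith
  have key : ∀ x, 0 ≤ x → x ≤ r → f x * D x ≤ 1 - F x := by
    intro x hx0 hxr
    rcases eq_or_lt_of_le hxr with h | h
    · subst h
      have hDx : D x = x := by simp only [hDdef]; ring
      rw [hDx]; linarith [hreq]
    · have hFx : F x < 1 := lt_of_le_of_lt (hcdf.mono hxr) hFr
      have hfx : 0 < f x := hcdf.f_pos x hx0 hFx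
      have hsr := hSR x r hx0 h hFr
      rw [hmon] at hsr
      unfold virtualValue at hsr
      have h2 : D x ≤ (1 - F x) / f x := by
        simp only [hDdef]; nlinarith
      have h3 : f x * D x ≤ f x * ((1 - F x) / f x) :=
        mul_le_mul_of_nonneg_left h2 hfx.le
      calc f x * D x ≤ f x * ((1 - F x) / f x) := h3
        _ = 1 - F x := by field_simp
  set G : ℝ → ℝ := fun x => (1 - F x) * D x ^ c with hGdef
  have hderiv : ∀ x, 0 ≤ x →
      HasDerivAt G ((1 - F x - f x * D x) * D x ^ (c - 1)) x := by
    intro x hx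
    have hDx : 0 < D x := hDpos x hx
    have hDd : HasDerivAt D (1 - α) x := by
      simpa [hDdef] using ((hasDerivAt_id x).const_mul (1 - α)).add_const (α * r)
    have hDc : HasDerivAt (fun y => D y ^ c) ((1 - α) * c * D x ^ (c - 1)) x :=
      hDd.rpow_const (Or.inl hDx.ne')
    have hFd : HasDerivAt (fun y => 1 - F y) (-(f x)) x :=
      (hcdf.hasDeriv x hx).const_sub 1
    have := hFd.mul hDc
    have hcc : (1 - α) * c = 1 := by
      rw [hc]; exact mul_one_div_cancel h1α.ne'
    have hsplit : D x ^ c = D x ^ (c - 1) * D x := by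
      rw [← Real.rpow_add_one hDx.ne' (c - 1)]
      norm_num
    refine HasDerivAt.congr_deriv this ?_
    rw [hcc, hsplit]
    ring
  have hmono : MonotoneOn G (Set.Icc v r) := by
    apply monotoneOn_of_deriv_nonneg (convex_Icc v r)
    · intro x hx
      exact (hderiv x (le_trans hv0 hx.1)).continuousAt.continuousWithinAt
    · intro x hx
      rw [interior_Icc] at hx
      exact (hderiv x (le_trans hv0 hx.1.le)).differentiableAt.differentiableWithinAt
    · intro x hx
      rw [interior_Icc] at hx
      have hx0 : 0 ≤ x := le_trans hv0 hx.1.le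
      rw [(hderiv x hx0).deriv]
      have := key x hx0 hx.2.le
      exact mul_nonneg (by linarith) (Real.rpow_nonneg (hDpos x hx0).le _)
  have hGvr : G v ≤ G r :=
    hmono (Set.left_mem_Icc.2 hvr) (Set.right_mem_Icc.2 hvr) hvr
  have hDr : D r = r := by simp only [hDdef]; ring
  have hGr : G r = (1 - F r) * r ^ c := by rw [hGdef]; simp only [hDr]
  have hDv : 0 < D v := hDpos v hv0
  have hDvc : 0 < D v ^ c := Real.rpow_pos_of_pos hDv c
  have hfinal : (1 - F v) * D v ^ c ≤ (1 - F r) * r ^ c := by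
    rw [← hGr]; exact hGvr
  have hdivpow : (r / D v) ^ c = r ^ c / D v ^ c := Real.div_rpow hr.le hDv.le c
  have hDveq : D v = (1 - α) * v + α * r := rfl
  rw [← hDveq, hdivpow, mul_div_assoc', le_div_iff₀ hDvc]
  linarith [hfinal]
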